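/- Define the sequence G : ℕ → ℤ by G(0) = 1, G(1) = 3, and G(q) = 5·G(q−1) − G(q−2) − 1 for q ≥ 2. Then G(q) > 0 for all q, and the ratio G(q)/G(q−1) converges, with limit lim_{q→∞} G(q)/G(q−1) = (5 + √21)/2. -/

import Mathlib

open Filter Topology

/-- G(q) = m_{1/q}: G(0) = 1, G(1) = 3, G(q) = 5·G(q−1) − G(q−2) − 1. -/
def G : ℕ → ℤ
  | 0 => 1
  | 1 => 3
  | (n + 2) => 5 * G (n + 1) - G n - 1

lemma G_pos_mono : ∀ q, 0 < G q ∧ G q ≤ G (q + 1) := by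
  intro q
  induction q using Nat.strong_induction_on with
  | _ q ih =>
    match q with
    | 0 => simp [G]
    | 1 => refine ⟨by norm_num [G], by norm_num [G]⟩
    | (n + 2) =>
      obtain ⟨h1, h2⟩ := ih (n + 1) (by omega)
      obtain ⟨h0, h02⟩ := ih n (by omega)
      have e : G (n + 2) = 5 * G (n + 1) - G n - 1 := rfl
      have e2 : G (n + 2 + 1) = 5 * G (n + 2) - G (n + 1) - 1 := rfl
      constructor
      · omega
      · omega

lemma G_closed (q : ℕ) :
    3 * (G q : ℝ) - 1 = (3 + Real.sqrt 21) / Real.sqrt 21 * ((5 + Real.sqrt 21) / 2) ^ q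
      + (Real.sqrt 21 - 3) / Real.sqrt 21 * ((5 - Real.sqrt 21) / 2) ^ q := by
  set s := Real.sqrt 21 with hsdef
  have hs : s ^ 2 = 21 := Real.sq_sqrt (by norm_num)
  have hs0 : (0:ℝ) < s := Real.sqrt_pos.mpr (by norm_num)
  induction q using Nat.strong_induction_on with
  | _ q ih =>
    match q with
    | 0 => push_cast [G]; field_simp; ring
    | 1 =>
      push_cast [G]
      field_simp
      nlinarith [hs, hs0]
    | (n + 2) =>
      have h1 := ih (n + 1) (by omega)
      have h0 := ih n (by omega)
      have e : (G (n + 2) : ℝ) = 5 * (G (n + 1) : ℝ) - (G n : ℝ) - 1 := by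
        have : G (n + 2) = 5 * G (n + 1) - G n - 1 := rfl
        rw [this]; push_cast; ring
      have hα : ((5 + s) / 2) ^ (n + 2) = 5 * ((5 + s) / 2) ^ (n + 1) - ((5 + s) / 2) ^ n := by
        have : ((5 + s) / 2) ^ 2 = 5 * ((5 + s) / 2) - 1 := by nlinarith [hs]
        calc ((5 + s) / 2) ^ (n + 2) = ((5 + s) / 2) ^ n * ((5 + s) / 2) ^ 2 := by ring
          _ = ((5 + s) / 2) ^ n * (5 * ((5 + s) / 2) - 1) := by rw [this]
          _ = 5 * ((5 + s) / 2) ^ (n + 1) - ((5 + s) / 2) ^ n := by ring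
      have hβ : ((5 - s) / 2) ^ (n + 2) = 5 * ((5 - s) / 2) ^ (n + 1) - ((5 - s) / 2) ^ n := by
        have : ((5 - s) / 2) ^ 2 = 5 * ((5 - s) / 2) - 1 := by nlinarith [hs]
        calc ((5 - s) / 2) ^ (n + 2) = ((5 - s) / 2) ^ n * ((5 - s) / 2) ^ 2 := by ring
          _ = ((5 - s) / 2) ^ n * (5 * ((5 - s) / 2) - 1) := by rw [this]
          _ = 5 * ((5 - s) / 2) ^ (n + 1) - ((5 - s) / 2) ^ n := by ring
      rw [e, hα, hβ]
      linarith [h1, h0]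

/-- All G(q) are positive, and G(q)/G(q−1) → (5 + √21)/2 as q → ∞. -/
theorem gen_markov_one_over_q_ratio_limit :
    (∀ q, 0 < G q) ∧
    Tendsto (fun q : ℕ => (G (q + 1) : ℝ) / (G q : ℝ)) atTop
      (𝓝 ((5 + Real.sqrt 21) / 2)) := by
  have hpos : ∀ q, 0 < G q := fun q => (G_pos_mono q).1
  refine ⟨hpos, ?_⟩
  set s := Real.sqrt 21 with hsdef
  have hs : s ^ 2 = 21 := Real.sq_sqrt (by norm_num)
  have hs0 : (0:ℝ) < s := Real.sqrt_pos.mpr (by norm_num)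
  have hs5 : s < 5 := by nlinarith
  set α : ℝ := (5 + s) / 2 with hαdef
  set β : ℝ := (5 - s) / 2 with hβdef
  set A : ℝ := (3 + s) / s with hAdef
  set B : ℝ := (s - 3) / s with hBdef
  have hα1 : 1 < α := by rw [hαdef]; nlinarith
  have hα0 : (0:ℝ) < α := by linarith
  have hβ0 : (0:ℝ) < β := by rw [hβdef]; linarith
  have hβα : β < α := by rw [hαdef, hβdef]; linarith
  have hA0 : (0:ℝ) < A := by rw [hAdef]; positivity
  -- f q := 3 * G q - 1 = A α^q + B β^q ; also f q + 1 = 3 G q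
  set f : ℕ → ℝ := fun q => A * α ^ q + B * β ^ q + 1 with hfdef
  have hfG : ∀ q, f q = 3 * (G q : ℝ) := by
    intro q
    have := G_closed q
    rw [hfdef]
    simp only
    rw [hAdef, hBdef, hαdef, hβdef]
    linarith
  have hfpos : ∀ q, 0 < f q := by
    intro q; rw [hfG q]
    have := hpos q
    have : (0:ℝ) < (G q : ℝ) := by exact_mod_cast this
    linarith
  -- g q := f q / α^q → A
  set g : ℕ → ℝ := fun q => f q / α ^ q with hgdef
  have hg_eq : ∀ q, g q = A + B * (β / α) ^ q + (α⁻¹) ^ q := by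
    intro q
    rw [hgdef, hfdef]
    simp only
    have hαq : α ^ q ≠ 0 := by positivity
    field_simp
    have h1 : α ^ q * (β / α) ^ q = β ^ q := by
      rw [← mul_pow, mul_div_assoc', mul_comm α β, mul_div_assoc, div_self hα0.ne', mul_one]
    have h2 : α ^ q * (1 / α) ^ q = 1 := by rw [one_div, inv_pow]; field_simp
    linear_combination (-B) * h1 - h2
  have hβα1 : β / α < 1 := (div_lt_one hα0).mpr hβα
  have hβα0 : 0 ≤ β / α := by positivity
  have hinv1 : α⁻¹ < 1 := by
    rw [inv_lt_one_iff₀]; right; exact hα1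
  have hinv0 : (0:ℝ) ≤ α⁻¹ := by positivity
  have hg_lim : Tendsto g atTop (𝓝 A) := by
    have h1 : Tendsto (fun q : ℕ => (β / α) ^ q) atTop (𝓝 0) :=
      tendsto_pow_atTop_nhds_zero_of_lt_one hβα0 hβα1
    have h2 : Tendsto (fun q : ℕ => (α⁻¹) ^ q) atTop (𝓝 0) :=
      tendsto_pow_atTop_nhds_zero_of_lt_one hinv0 hinv1
    have : Tendsto (fun q : ℕ => A + B * (β / α) ^ q + (α⁻¹) ^ q) atTop (𝓝 (A + B * 0 + 0)) := by
      exact ((tendsto_const_nhds.add (h1.const_mul B)).add h2)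
    simp only [mul_zero, add_zero] at this
    exact this.congr (fun q => (hg_eq q).symm)
  have hg_lim' : Tendsto (fun q => g (q + 1)) atTop (𝓝 A) :=
    hg_lim.comp (tendsto_add_atTop_nat 1)
  have key : Tendsto (fun q : ℕ => α * g (q + 1) / g q) atTop (𝓝 α) := by
    have h := (hg_lim'.const_mul α).div hg_lim hA0.ne'
    rw [show α * A / A = α by field_simp] at h
    exact h
  refine key.congr (fun q => ?_)
  have hαq : α ^ q ≠ 0 := by positivity
  have hfq : f q ≠ 0 := (hfpos q).ne'
  have hGq : (G q : ℝ) ≠ 0 := by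
    have := hpos q
    have : (0:ℝ) < (G q : ℝ) := by exact_mod_cast this
    linarith
  rw [hgdef]
  simp only
  rw [hfG, hfG]
  field_simp
  ring
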